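/- Let d and K be positive integers, let L > 0, and let λ ≥ max(1, L²). Let x₁, …, x_K ∈ ℝ^d satisfy ‖x_k‖₂ ≤ L for all k ∈ {1,…,K}. Define Σ₀ = λ·I_d and Σ_k = Σ₀ + Σ_{i=1}^{k} x_i x_iᵀ for k ≥ 1. Then Σ_{k=1}^{K} x_kᵀ Σ_{k−1}^{−1} x_k ≤ 2 d · log((dλ + K L²)/(d λ)). -/

import Mathlib

open Matrix Finset

private lemma psd_vmv {d : ℕ} (v : Fin d → ℝ) : (Matrix.vecMulVec v v).PosSemidef := by
  refine Matrix.PosSemidef.of_dotProduct_mulVec_nonneg ?_ ?_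
  · ext i j
    simp [Matrix.conjTranspose_apply, Matrix.vecMulVec_apply, mul_comm]
  · intro y
    have h : Matrix.vecMulVec v v *ᵥ y = (v ⬝ᵥ y) • v := by
      ext i
      simp [Matrix.mulVec, Matrix.vecMulVec_apply, dotProduct, Finset.mul_sum]
      rw [Finset.sum_mul]
      exact Finset.sum_congr rfl fun j _ => by ring
    rw [h]
    have h2 : star y ⬝ᵥ ((v ⬝ᵥ y) • v) = (v ⬝ᵥ y) * (v ⬝ᵥ y) := by
      simp [dotProduct_smul, dotProduct, Finset.mul_sum]
      exact Finset.sum_congr rfl fun j _ => by ring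
    rw [h2]
    exact mul_self_nonneg _

private lemma half_log_bound {u : ℝ} (h0 : 0 ≤ u) (h1 : u ≤ 1) : u ≤ 2 * Real.log (1 + u) := by
  have hpos : 0 < 1 - u / 2 := by linarith
  have he : 1 - u / 2 ≤ Real.exp (-(u / 2)) := by
    have := Real.add_one_le_exp (-(u / 2)); linarith
  have h2 : Real.exp (u / 2) ≤ 1 + u := by
    have hinv : Real.exp (u / 2) = (Real.exp (-(u / 2)))⁻¹ := by
      rw [← Real.exp_neg, neg_neg]
    rw [hinv]
    have : (Real.exp (-(u / 2)))⁻¹ ≤ (1 - u / 2)⁻¹ := inv_anti₀ hpos he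
    refine this.trans ?_
    rw [inv_le_iff_one_le_mul₀ (by linarith)]
    nlinarith
  have := Real.log_le_log (Real.exp_pos _) h2
  rw [Real.log_exp] at this
  linarith

private lemma trace_eq_sum_eig {d : ℕ} {A : Matrix (Fin d) (Fin d) ℝ} (hA : A.IsHermitian) :
    A.trace = ∑ i, hA.eigenvalues i := by
  conv_lhs => rw [hA.spectral_theorem, Unitary.conjStarAlgAut_apply]
  rw [Matrix.trace_mul_cycle]
  rw [show (star (hA.eigenvectorUnitary : Matrix (Fin d) (Fin d) ℝ)) *
      (hA.eigenvectorUnitary : Matrix (Fin d) (Fin d) ℝ) = 1 from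
    Unitary.coe_star_mul_self hA.eigenvectorUnitary]
  rw [Matrix.one_mul]
  simp [Matrix.trace, Matrix.diag]

private lemma logdet_le {d : ℕ} (hd : 0 < d) {A : Matrix (Fin d) (Fin d) ℝ} (hA : A.PosDef) :
    Real.log A.det ≤ d * Real.log (A.trace / d) := by
  have hH := hA.isHermitian
  set ev := hH.eigenvalues with hev
  have hevpos : ∀ i, 0 < ev i := hA.eigenvalues_pos
  have hdet : A.det = ∏ i, ev i := by
    have := hH.det_eq_prod_eigenvalues
    simpa using this
  have htr : A.trace = ∑ i, ev i := trace_eq_sum_eig hH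
  set c : ℝ := A.trace / d with hc
  have hTpos : 0 < A.trace := by
    rw [htr]
    have : Nonempty (Fin d) := Fin.pos_iff_nonempty.mp hd
    exact Finset.sum_pos (fun i _ => hevpos i) Finset.univ_nonempty
  have hdpos : (0:ℝ) < d := by exact_mod_cast hd
  have hcpos : 0 < c := div_pos hTpos hdpos
  have hlogdet : Real.log A.det = ∑ i, Real.log (ev i) := by
    rw [hdet, Real.log_prod fun i _ => (hevpos i).ne']
  have key : ∀ i, Real.log (ev i) ≤ ev i / c - 1 + Real.log c := by
    intro i
    have h1 : Real.log (ev i / c) ≤ ev i / c - 1 :=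
      Real.log_le_sub_one_of_pos (div_pos (hevpos i) hcpos)
    rw [Real.log_div (hevpos i).ne' hcpos.ne'] at h1
    linarith
  calc Real.log A.det = ∑ i, Real.log (ev i) := hlogdet
    _ ≤ ∑ i : Fin d, (ev i / c - 1 + Real.log c) := Finset.sum_le_sum fun i _ => key i
    _ = (∑ i, ev i) / c - d + d * Real.log c := by
        rw [Finset.sum_add_distrib, Finset.sum_sub_distrib, ← Finset.sum_div]
        simp [mul_comm]
    _ = d * Real.log c := by
        rw [← htr, hc]
        field_simp
        ring

private lemma smul_one_posdef {d : ℕ} {lam : ℝ} (hlam : 0 < lam) :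
    (lam • (1 : Matrix (Fin d) (Fin d) ℝ)).PosDef := by
  rw [Matrix.smul_one_eq_diagonal]
  exact Matrix.PosDef.diagonal fun i => hlam

private lemma quad_bound {d : ℕ} {lam : ℝ} (hlam : 0 < lam)
    {P : Matrix (Fin d) (Fin d) ℝ} (hP : P.PosSemidef)
    {A : Matrix (Fin d) (Fin d) ℝ} (hA : A = lam • (1 : Matrix (Fin d) (Fin d) ℝ) + P)
    (v : Fin d → ℝ) :
    0 ≤ v ⬝ᵥ A⁻¹ *ᵥ v ∧ lam * (v ⬝ᵥ A⁻¹ *ᵥ v) ≤ v ⬝ᵥ v := by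
  have hApd : A.PosDef := by
    rw [hA]; exact (smul_one_posdef hlam).add_posSemidef hP
  have hInv : A⁻¹.PosDef := hApd.inv
  set y : Fin d → ℝ := A⁻¹ *ᵥ v with hy
  set u : ℝ := v ⬝ᵥ y with hudef
  have hu0 : 0 ≤ u := by
    have := hInv.posSemidef.dotProduct_mulVec_nonneg v
    simpa [hudef, hy] using this
  have hAy : A *ᵥ y = v := by
    rw [hy, Matrix.mulVec_mulVec, Matrix.mul_nonsing_inv _
      (isUnit_iff_ne_zero.mpr hApd.det_pos.ne'), Matrix.one_mulVec]
  have hyAy : y ⬝ᵥ (A *ᵥ y) = u := by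
    rw [hAy, dotProduct_comm, hudef]
  have hquad : y ⬝ᵥ (A *ᵥ y) = lam * (y ⬝ᵥ y) + y ⬝ᵥ (P *ᵥ y) := by
    rw [hA, Matrix.add_mulVec, dotProduct_add, Matrix.smul_mulVec,
      Matrix.one_mulVec, dotProduct_smul]
    simp [smul_eq_mul]
  have hyPy : 0 ≤ y ⬝ᵥ (P *ᵥ y) := by
    have := hP.dotProduct_mulVec_nonneg y
    simpa using this
  have hla : lam * (y ⬝ᵥ y) ≤ u := by rw [← hyAy, hquad]; linarith
  have hyy : 0 ≤ y ⬝ᵥ y := Finset.sum_nonneg fun i _ => mul_self_nonneg _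
  have hvv : 0 ≤ v ⬝ᵥ v := Finset.sum_nonneg fun i _ => mul_self_nonneg _
  have hcs : u ^ 2 ≤ (v ⬝ᵥ v) * (y ⬝ᵥ y) := by
    have := Finset.sum_mul_sq_le_sq_mul_sq Finset.univ v y
    simpa [hudef, dotProduct, sq] using this
  refine ⟨hu0, ?_⟩
  rcases hu0.eq_or_lt with h | h
  · rw [← h]; simpa using hvv
  · nlinarith [mul_le_mul_of_nonneg_left hla hvv]

/-- Elliptical potential lemma: for `x₁,…,x_K ∈ ℝ^d` with `‖x_k‖₂ ≤ L` and
`λ ≥ max(1, L²)`, setting `Σ_k = λ I + ∑_{i≤k} x_i x_iᵀ`, one has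
`∑_{k=1}^K x_kᵀ Σ_{k-1}⁻¹ x_k ≤ 2 d log((dλ + K L²)/(dλ))`. -/
theorem elliptical_potential
    (d K : ℕ) (hd : 0 < d) (hK : 0 < K)
    (L lam : ℝ) (hL : 0 < L) (hlam : max 1 (L ^ 2) ≤ lam)
    (x : ℕ → Fin d → ℝ)
    (hx : ∀ k ∈ Finset.Icc 1 K, Real.sqrt (x k ⬝ᵥ x k) ≤ L)
    (Sig : ℕ → Matrix (Fin d) (Fin d) ℝ)
    (hSig : ∀ k : ℕ, Sig k = lam • (1 : Matrix (Fin d) (Fin d) ℝ)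
        + ∑ i ∈ Finset.Icc 1 k, Matrix.vecMulVec (x i) (x i)) :
    ∑ k ∈ Finset.Icc 1 K, x k ⬝ᵥ ((Sig (k - 1))⁻¹).mulVec (x k)
      ≤ 2 * d * Real.log ((d * lam + K * L ^ 2) / (d * lam)) := by
  have hlam1 : 1 ≤ lam := le_trans (le_max_left _ _) hlam
  have hlamL : L ^ 2 ≤ lam := le_trans (le_max_right _ _) hlam
  have hlam0 : (0:ℝ) < lam := lt_of_lt_of_le one_pos hlam1
  have hdpos : (0:ℝ) < d := by exact_mod_cast hd
  set u : ℕ → ℝ := fun k => x k ⬝ᵥ ((Sig (k - 1))⁻¹) *ᵥ (x k) with hu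
  -- each summand is PSD
  have hPsd : ∀ n : ℕ, (∑ i ∈ Finset.Icc 1 n, Matrix.vecMulVec (x i) (x i)).PosSemidef := by
    intro n
    induction (Finset.Icc 1 n) using Finset.induction with
    | empty => simpa using Matrix.PosSemidef.zero
    | insert _ _ h ih =>
      rw [Finset.sum_insert h]
      exact (psd_vmv _).add ih
  have hPD : ∀ n : ℕ, (Sig n).PosDef := by
    intro n
    rw [hSig n]
    exact (smul_one_posdef hlam0).add_posSemidef (hPsd n)
  -- bound on ‖x k‖²
  have hxx : ∀ k ∈ Finset.Icc 1 K, x k ⬝ᵥ x k ≤ L ^ 2 := by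
    intro k hk
    have h0 : 0 ≤ x k ⬝ᵥ x k := Finset.sum_nonneg fun i _ => mul_self_nonneg _
    calc x k ⬝ᵥ x k = Real.sqrt (x k ⬝ᵥ x k) ^ 2 := (Real.sq_sqrt h0).symm
      _ ≤ L ^ 2 := pow_le_pow_left₀ (Real.sqrt_nonneg _) (hx k hk) 2
  -- quadratic form bounds
  have hquad : ∀ k : ℕ, 0 ≤ u k ∧ lam * u k ≤ x k ⬝ᵥ x k := fun k =>
    quad_bound hlam0 (hPsd (k - 1)) (hSig (k - 1)) (x k)
  have hu01 : ∀ k ∈ Finset.Icc 1 K, 0 ≤ u k ∧ u k ≤ 1 := by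
    intro k hk
    refine ⟨(hquad k).1, ?_⟩
    have h1 := (hquad k).2
    have h2 := hxx k hk
    nlinarith [(hquad k).1]
  -- determinant recursion
  have hdet : ∀ n : ℕ, (Sig n).det = lam ^ d * ∏ k ∈ Finset.Icc 1 n, (1 + u k) := by
    intro n
    induction n with
    | zero =>
      simp [hSig 0, Matrix.det_smul]
    | succ m ih =>
      have hstep : Sig (m + 1) = Sig m + Matrix.vecMulVec (x (m + 1)) (x (m + 1)) := by
        rw [hSig (m + 1), hSig m, Finset.sum_Icc_succ_top (Nat.le_add_left 1 m), add_assoc]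
      have hUnit : IsUnit (Sig m).det := isUnit_iff_ne_zero.mpr (hPD m).det_pos.ne'
      have huval : u (m + 1) = x (m + 1) ⬝ᵥ (Sig m)⁻¹ *ᵥ x (m + 1) := by simp [hu]
      rw [hstep, Matrix.vecMulVec_eq (Fin 1), Matrix.det_add_mul _ _ hUnit, ih,
        Matrix.mul_assoc, ← Matrix.replicateCol_mulVec, Matrix.det_unique, Matrix.add_apply,
        Matrix.one_apply_eq, Matrix.replicateRow_mul_replicateCol_apply,
        Finset.prod_Icc_succ_top (Nat.le_add_left 1 m), huval]
      ring
  have hfacpos : ∀ k ∈ Finset.Icc 1 K, 0 < 1 + u k := fun k hk => by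
    linarith [(hu01 k hk).1]
  have hprodpos : 0 < ∏ k ∈ Finset.Icc 1 K, (1 + u k) := Finset.prod_pos hfacpos
  have hlogdetK : Real.log (Sig K).det
      = d * Real.log lam + ∑ k ∈ Finset.Icc 1 K, Real.log (1 + u k) := by
    rw [hdet K, Real.log_mul (pow_ne_zero _ hlam0.ne') hprodpos.ne',
      Real.log_pow, Real.log_prod fun k hk => (hfacpos k hk).ne']
  have hsum : ∑ k ∈ Finset.Icc 1 K, u k
      ≤ 2 * ∑ k ∈ Finset.Icc 1 K, Real.log (1 + u k) := by
    rw [Finset.mul_sum]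
    exact Finset.sum_le_sum fun k hk => half_log_bound (hu01 k hk).1 (hu01 k hk).2
  have htrace : (Sig K).trace ≤ d * lam + K * L ^ 2 := by
    rw [hSig K, Matrix.trace_add, Matrix.trace_smul, Matrix.trace_one, Matrix.trace_sum]
    have h1 : ∀ k ∈ Finset.Icc 1 K,
        (Matrix.vecMulVec (x k) (x k)).trace = x k ⬝ᵥ x k := by
      intro k hk
      simp [Matrix.trace, Matrix.diag, Matrix.vecMulVec_apply, dotProduct]
    rw [Finset.sum_congr rfl h1]
    have h2 : ∑ k ∈ Finset.Icc 1 K, x k ⬝ᵥ x k ≤ K * L ^ 2 := by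
      calc ∑ k ∈ Finset.Icc 1 K, x k ⬝ᵥ x k ≤ ∑ _k ∈ Finset.Icc 1 K, L ^ 2 :=
            Finset.sum_le_sum hxx
        _ = K * L ^ 2 := by
            rw [Finset.sum_const, Nat.card_Icc]
            simp [nsmul_eq_mul]
    simp only [smul_eq_mul, Fintype.card_fin]
    linarith
  have hT : (0:ℝ) < (d:ℝ) * lam := by positivity
  have hT2 : (0:ℝ) < (d:ℝ) * lam + K * L ^ 2 := by positivity
  have htrlb : (d:ℝ) * lam ≤ (Sig K).trace := by
    rw [hSig K, Matrix.trace_add, Matrix.trace_smul, Matrix.trace_one, Matrix.trace_sum]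
    have h1 : ∀ k ∈ Finset.Icc 1 K, (0:ℝ) ≤ (Matrix.vecMulVec (x k) (x k)).trace := by
      intro k hk
      simp only [Matrix.trace, Matrix.diag, Matrix.vecMulVec_apply]
      exact Finset.sum_nonneg fun i _ => mul_self_nonneg _
    have := Finset.sum_nonneg h1
    simp only [smul_eq_mul, Fintype.card_fin]
    linarith
  have hld : Real.log (Sig K).det ≤ d * Real.log (((d:ℝ) * lam + K * L ^ 2) / d) := by
    refine (logdet_le hd (hPD K)).trans ?_
    refine mul_le_mul_of_nonneg_left ?_ (by positivity)
    have htrpos : 0 < (Sig K).trace := lt_of_lt_of_le hT htrlb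
    exact Real.log_le_log (div_pos htrpos hdpos) ((div_le_div_iff_of_pos_right hdpos).mpr htrace)
  calc ∑ k ∈ Finset.Icc 1 K, x k ⬝ᵥ ((Sig (k - 1))⁻¹).mulVec (x k)
      = ∑ k ∈ Finset.Icc 1 K, u k := rfl
    _ ≤ 2 * ∑ k ∈ Finset.Icc 1 K, Real.log (1 + u k) := hsum
    _ = 2 * (Real.log (Sig K).det - d * Real.log lam) := by rw [hlogdetK]; ring
    _ ≤ 2 * (d * Real.log (((d:ℝ) * lam + K * L ^ 2) / d) - d * Real.log lam) := by
        linarith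
    _ = 2 * d * Real.log (((d:ℝ) * lam + K * L ^ 2) / ((d:ℝ) * lam)) := by
        rw [Real.log_div hT2.ne' hT.ne', Real.log_div hT2.ne' (ne_of_gt hdpos),
          Real.log_mul (ne_of_gt hdpos) hlam0.ne']
        ring
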